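/- Let ℓ = 2m+1 be odd, let v ∈ ℝ, and let (Y_1, …, Y_ℓ) be a random vector of integrable real random variables whose joint distribution is symmetric about (v, …, v), i.e., (Y_1 − v, …, Y_ℓ − v) has the same joint distribution as (v − Y_1, …, v − Y_ℓ). Then the median of Y_1, …, Y_ℓ (the (m+1)-st smallest value) is integrable and E[median(Y_1, …, Y_ℓ)] = v; i.e., the median is an unbiased estimator of v. -/

import Mathlib

open MeasureTheory

/-- The median of an odd number `2m+1` of reals: the `(m+1)`-st smallest value. -/
noncomputable def oddMedian {m : ℕ} (g : Fin (2 * m + 1) → ℝ) : ℝ :=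
  g (Tuple.sort g ⟨m, by omega⟩)

section aux

lemma aux_powersetCard_nonempty {n k : ℕ} (hk : k < n) :
    ((Finset.univ : Finset (Fin n)).powersetCard (k + 1)).Nonempty := by
  rw [Finset.powersetCard_nonempty]
  simpa using hk

lemma aux_mem_nonempty {n k : ℕ}
    {s : Finset (Fin n)} (hs : s ∈ (Finset.univ : Finset (Fin n)).powersetCard (k + 1)) :
    s.Nonempty := by
  rw [Finset.mem_powersetCard] at hs
  rw [← Finset.card_pos, hs.2]
  omega

/-- The `(k+1)`-st smallest value among `g 0, …, g (n-1)`, expressed as a min of maxes. -/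
noncomputable def kthMin {n : ℕ} (k : ℕ) (hk : k < n) (g : Fin n → ℝ) : ℝ :=
  ((Finset.univ : Finset (Fin n)).powersetCard (k + 1)).attach.inf'
    (by simpa [Finset.attach_nonempty_iff] using aux_powersetCard_nonempty hk)
    (fun s => s.1.sup' (aux_mem_nonempty s.2) g)

lemma sort_eq_kthMin {n k : ℕ} (hk : k < n) (g : Fin n → ℝ) :
    g (Tuple.sort g ⟨k, hk⟩) = kthMin k hk g := by
  have hmono : Monotone (g ∘ Tuple.sort g) := Tuple.monotone_sort g
  apply le_antisymm
  · -- ≤ every sup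
    apply Finset.le_inf'
    rintro ⟨s, hs⟩ -
    rw [Finset.mem_powersetCard] at hs
    -- pull back s along sort
    set t : Finset (Fin n) := s.image (Tuple.sort g).symm with ht
    have hcard : t.card = k + 1 := by
      rw [ht, Finset.card_image_of_injective _ (Equiv.injective _), hs.2]
    have : ∃ j ∈ t, (⟨k, hk⟩ : Fin n) ≤ j := by
      by_contra h
      push_neg at h
      have hsub : t ⊆ Finset.Iio (⟨k, hk⟩ : Fin n) := by
        intro j hj
        exact Finset.mem_Iio.mpr (h j hj)
      have h3 := Finset.card_le_card hsub
      rw [Fin.card_Iio] at h3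
      have h4 : ((⟨k, hk⟩ : Fin n) : ℕ) = k := rfl
      omega
    obtain ⟨j, hj, hkj⟩ := this
    obtain ⟨i, hi, rfl⟩ := Finset.mem_image.mp hj
    calc g (Tuple.sort g ⟨k, hk⟩) ≤ g (Tuple.sort g ((Tuple.sort g).symm i)) := hmono hkj
    _ = g i := by rw [Equiv.apply_symm_apply]
    _ ≤ _ := Finset.le_sup' g hi
  · -- witness: image of Iic ⟨k⟩ under sort
    set s0 : Finset (Fin n) := (Finset.Iic (⟨k, hk⟩ : Fin n)).image (Tuple.sort g) with hs0
    have hmem : s0 ∈ (Finset.univ : Finset (Fin n)).powersetCard (k + 1) := by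
      rw [Finset.mem_powersetCard]
      refine ⟨Finset.subset_univ _, ?_⟩
      rw [hs0, Finset.card_image_of_injective _ (Equiv.injective _), Fin.card_Iic]
    refine le_trans (Finset.inf'_le _ (Finset.mem_attach _ ⟨s0, hmem⟩)) ?_
    apply Finset.sup'_le
    intro i hi
    obtain ⟨j, hj, rfl⟩ := Finset.mem_image.mp hi
    exact hmono (Finset.mem_Iic.mp hj)

lemma measurable_finset_inf' {ι δ : Type*} [MeasurableSpace δ] {s : Finset ι}
    (hs : s.Nonempty) {f : ι → δ → ℝ} (hf : ∀ i ∈ s, Measurable (f i)) :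
    Measurable (s.inf' hs f) :=
  Finset.inf'_induction hs _ (fun f hf g hg => hf.min hg) hf

lemma measurable_kthMin {n k : ℕ} (hk : k < n) :
    Measurable (kthMin (n := n) k hk) := by
  have h := measurable_finset_inf'
    (s := ((Finset.univ : Finset (Fin n)).powersetCard (k + 1)).attach)
    (by simpa [Finset.attach_nonempty_iff] using aux_powersetCard_nonempty hk)
    (f := fun s (g : Fin n → ℝ) => s.1.sup' (aux_mem_nonempty s.2) g)
    (fun s _ => by
      have h2 := Finset.measurable_sup' (s := s.1) (aux_mem_nonempty s.2)
        (f := fun i (g : Fin n → ℝ) => g i) (fun i _ => measurable_pi_apply i)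
      have heq2 : (fun (g : Fin n → ℝ) => s.1.sup' (aux_mem_nonempty s.2) g)
          = s.1.sup' (aux_mem_nonempty s.2) (fun i (g : Fin n → ℝ) => g i) := by
        funext g
        rw [Finset.sup'_apply]
      show Measurable (fun (g : Fin n → ℝ) => s.1.sup' (aux_mem_nonempty s.2) g)
      rw [heq2]
      exact h2)
  have heq : kthMin (n := n) k hk
      = ((Finset.univ : Finset (Fin n)).powersetCard (k + 1)).attach.inf'
        (by simpa [Finset.attach_nonempty_iff] using aux_powersetCard_nonempty hk)
        (fun s (g : Fin n → ℝ) => s.1.sup' (aux_mem_nonempty s.2) g) := by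
    funext g
    rw [Finset.inf'_apply]
    rfl
  rw [heq]
  exact h

lemma oddMedian_eq_kthMin {m : ℕ} (g : Fin (2 * m + 1) → ℝ) :
    oddMedian g = kthMin m (by omega) g :=
  sort_eq_kthMin _ g

lemma measurable_oddMedian {m : ℕ} : Measurable (oddMedian (m := m)) := by
  have : oddMedian (m := m) = kthMin m (by omega) := funext oddMedian_eq_kthMin
  rw [this]
  exact measurable_kthMin _

lemma abs_oddMedian_le {m : ℕ} (g : Fin (2 * m + 1) → ℝ) :
    |oddMedian g| ≤ ∑ i, |g i| := by
  unfold oddMedian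
  exact Finset.single_le_sum (f := fun i => |g i|)
    (fun i _ => abs_nonneg (g i)) (Finset.mem_univ _)

lemma oddMedian_add_const {m : ℕ} (g : Fin (2 * m + 1) → ℝ) (c : ℝ) :
    oddMedian (fun i => g i + c) = oddMedian g + c := by
  have hmono : Monotone ((fun i => g i + c) ∘ Tuple.sort g) := by
    intro i j hij
    simpa using (Tuple.monotone_sort g hij)
  have h := Tuple.comp_sort_eq_comp_iff_monotone.mpr hmono
  have h2 := congrFun h (⟨m, by omega⟩ : Fin (2 * m + 1))
  unfold oddMedian
  simpa using h2.symm

lemma oddMedian_neg {m : ℕ} (g : Fin (2 * m + 1) → ℝ) :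
    oddMedian (fun i => -g i) = -oddMedian g := by
  set σ : Equiv.Perm (Fin (2 * m + 1)) := Fin.revPerm.trans (Tuple.sort g) with hσ
  have hmono : Monotone ((fun i => -g i) ∘ σ) := by
    intro i j hij
    have h1 : Fin.rev j ≤ Fin.rev i := Fin.rev_le_rev.mpr hij
    have h2 := Tuple.monotone_sort g h1
    simp only [Function.comp_apply] at h2 ⊢
    simp only [hσ, Equiv.trans_apply, Fin.revPerm_apply]
    linarith [h2]
  have h := Tuple.comp_sort_eq_comp_iff_monotone.mpr hmono
  have h2 := congrFun h (⟨m, by omega⟩ : Fin (2 * m + 1))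
  have hrev : Fin.rev (⟨m, by omega⟩ : Fin (2 * m + 1)) = ⟨m, by omega⟩ := by
    ext
    simp [Fin.val_rev]
    omega
  unfold oddMedian
  simp only [Function.comp_apply, hσ, Equiv.trans_apply, Fin.revPerm_apply, hrev] at h2
  exact h2.symm

end aux

/-- Let `ℓ = 2m+1` be odd and let `Y 1, …, Y ℓ` be integrable real
random variables whose joint distribution is symmetric about `(v, …, v)`, i.e.,
`(Y i − v)_i` has the same joint distribution as `(v − Y i)_i`. Then the median of
`Y 1, …, Y ℓ` (the `(m+1)`-st smallest value) is integrable and has expectation `v`;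
i.e., the median is an unbiased estimator of `v`. -/
theorem median_symmetric_unbiased {Ω : Type*} [MeasurableSpace Ω]
    (μ : Measure Ω) [IsProbabilityMeasure μ] (m : ℕ) (v : ℝ)
    (Y : Fin (2 * m + 1) → Ω → ℝ)
    (hmeas : ∀ i, Measurable (Y i))
    (hint : ∀ i, Integrable (Y i) μ)
    (hsym : Measure.map (fun ω (i : Fin (2 * m + 1)) => Y i ω - v) μ
          = Measure.map (fun ω (i : Fin (2 * m + 1)) => v - Y i ω) μ) :
    Integrable (fun ω => oddMedian (fun i => Y i ω)) μ
    ∧ ∫ ω, oddMedian (fun i => Y i ω) ∂μ = v := by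
  set f : Ω → ℝ := fun ω => oddMedian (fun i => Y i ω) with hf
  have hfmeas : Measurable f :=
    measurable_oddMedian.comp (measurable_pi_lambda _ fun i => hmeas i)
  have hfint : Integrable f μ := by
    refine Integrable.mono' (g := fun ω => ∑ i, |Y i ω|)
      (integrable_finset_sum _ fun i _ => (hint i).abs) hfmeas.aestronglyMeasurable ?_
    filter_upwards with ω
    simpa using abs_oddMedian_le (fun i => Y i ω)
  refine ⟨hfint, ?_⟩
  -- measurability of the push-forward maps
  have hT : Measurable (fun ω (i : Fin (2 * m + 1)) => Y i ω - v) :=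
    measurable_pi_lambda _ fun i => (hmeas i).sub measurable_const
  have hS : Measurable (fun ω (i : Fin (2 * m + 1)) => v - Y i ω) :=
    measurable_pi_lambda _ fun i => measurable_const.sub (hmeas i)
  have hmed : Measurable (oddMedian (m := m)) := measurable_oddMedian
  have key : ∫ ω, oddMedian (fun i => Y i ω - v) ∂μ
      = ∫ ω, oddMedian (fun i => v - Y i ω) ∂μ := by
    rw [← integral_map hT.aemeasurable hmed.aestronglyMeasurable, hsym,
      integral_map hS.aemeasurable hmed.aestronglyMeasurable]
  have hshift : ∀ ω, oddMedian (fun i => Y i ω - v) = f ω - v := by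
    intro ω
    have := oddMedian_add_const (fun i => Y i ω) (-v)
    simpa [sub_eq_add_neg] using this
  have hnegeq : ∀ ω, oddMedian (fun i => v - Y i ω) = -(f ω - v) := by
    intro ω
    have h1 : (fun i => v - Y i ω) = fun i => -((fun i => Y i ω - v) i) := by
      funext i; ring
    rw [h1, oddMedian_neg, hshift ω]
  have key2 : ∫ ω, (f ω - v) ∂μ = -∫ ω, (f ω - v) ∂μ := by
    calc ∫ ω, (f ω - v) ∂μ = ∫ ω, oddMedian (fun i => Y i ω - v) ∂μ := by
          simp_rw [hshift]
    _ = ∫ ω, oddMedian (fun i => v - Y i ω) ∂μ := key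
    _ = ∫ ω, -(f ω - v) ∂μ := by simp_rw [hnegeq]
    _ = -∫ ω, (f ω - v) ∂μ := integral_neg _
  have hzero : ∫ ω, (f ω - v) ∂μ = 0 := by linarith
  have := integral_sub hfint (integrable_const v)
  rw [hzero, integral_const] at this
  simp at this
  linarith [this.symm]
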